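/- Let 1 ≤ p ≤ q ≤ n. The bipartite graph G on vertex classes X = {x_1,...,x_n} and Y = {y_1,...,y_n} with edge set {x_i y_j : i < p} ∪ {x_i y_j : j < p} ∪ {x_i y_j : p ≤ i, j < q} is weakly K_{p,q}-saturated, and it has exactly n^2 − (n−p+1)^2 + (q−p)^2 edges. -/

import Mathlib

/-- `S`, `T` span a copy of `K_{p,q}`, with the side of size `p` in either
class. -/
def IsKpq (p q : ℕ) {n : ℕ} (S T : Finset (Fin n)) : Prop :=
  (S.card = p ∧ T.card = q) ∨ (S.card = q ∧ T.card = p)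

/-- An `n × n` bipartite graph, given by its edge set
`E ⊆ X × Y = Fin n × Fin n`, is weakly `K_{p,q}`-saturated if its non-edges
can be ordered as a list `l` so that adding them one at a time, each newly
added edge lies in a copy of `K_{p,q}` (in either orientation) all of whose
edges are already present. -/
def WeakSatBip (n p q : ℕ) (E : Finset (Fin n × Fin n)) : Prop :=
  ∃ l : List (Fin n × Fin n), l.Nodup ∧ (∀ e, e ∈ l ↔ e ∉ E) ∧
    ∀ k : Fin l.length, ∃ S T : Finset (Fin n),
      IsKpq p q S T ∧ l.get k ∈ S ×ˢ T ∧
      (S ×ˢ T : Finset (Fin n × Fin n)) ⊆ E ∪ (l.take (k + 1)).toFinset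

lemma finIv_card (n a b : ℕ) (hb : b ≤ n) :
    (Finset.univ.filter fun i : Fin n => a ≤ i.val ∧ i.val < b).card = b - a := by
  have h : (Finset.univ.filter fun i : Fin n => a ≤ i.val ∧ i.val < b)
      = (Finset.Ico a b).attachFin
          (fun m hm => lt_of_lt_of_le (Finset.mem_Ico.mp hm).2 hb) := by
    ext i
    simp [Finset.mem_attachFin, Finset.mem_Ico]
  rw [h, Finset.card_attachFin, Nat.card_Ico]

lemma mem_take_succ_get {α : Type*} (l : List α) (k : Fin l.length) :
    l.get k ∈ l.take (k.val + 1) := by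
  rw [List.take_succ]
  refine List.mem_append_right _ ?_
  simp [List.getElem?_eq_getElem k.isLt, List.get_eq_getElem]

/-- The graph with edges `{x_i y_j : i < p} ∪ {x_i y_j : j < p} ∪
{x_i y_j : p ≤ i, j < q}` (1-indexed labels) is weakly `K_{p,q}`-saturated
and has exactly `n² − (n−p+1)² + (q−p)²` edges. -/
theorem construction_bip (n p q : ℕ) (hp : 1 ≤ p) (hpq : p ≤ q) (hqn : q ≤ n) :
    WeakSatBip n p q
      (Finset.univ.filter fun e : Fin n × Fin n =>
        e.1.val + 1 < p ∨ e.2.val + 1 < p ∨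
          (p ≤ e.1.val + 1 ∧ e.1.val + 1 < q ∧ p ≤ e.2.val + 1 ∧ e.2.val + 1 < q)) ∧
    (Finset.univ.filter fun e : Fin n × Fin n =>
        e.1.val + 1 < p ∨ e.2.val + 1 < p ∨
          (p ≤ e.1.val + 1 ∧ e.1.val + 1 < q ∧ p ≤ e.2.val + 1 ∧ e.2.val + 1 < q)).card =
      n ^ 2 - (n - p + 1) ^ 2 + (q - p) ^ 2 := by
  classical
  set E : Finset (Fin n × Fin n) :=
    (Finset.univ.filter fun e : Fin n × Fin n =>
        e.1.val + 1 < p ∨ e.2.val + 1 < p ∨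
          (p ≤ e.1.val + 1 ∧ e.1.val + 1 < q ∧ p ≤ e.2.val + 1 ∧ e.2.val + 1 < q)) with hE
  have hmemE : ∀ e : Fin n × Fin n, e ∈ E ↔
      (e.1.val + 1 < p ∨ e.2.val + 1 < p ∨
        (p ≤ e.1.val + 1 ∧ e.1.val + 1 < q ∧ p ≤ e.2.val + 1 ∧ e.2.val + 1 < q)) := by
    intro e; simp [hE]
  -- the small/large row and column sets
  set Sp : Finset (Fin n) := Finset.univ.filter fun i : Fin n => 0 ≤ i.val ∧ i.val < p - 1
    with hSp
  set Sq : Finset (Fin n) := Finset.univ.filter fun i : Fin n => 0 ≤ i.val ∧ i.val < q - 1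
    with hSq
  have hSpcard : Sp.card = p - 1 := finIv_card n 0 (p - 1) (by omega)
  have hSqcard : Sq.card = q - 1 := finIv_card n 0 (q - 1) (by omega)
  have hmemSp : ∀ i : Fin n, i ∈ Sp ↔ i.val < p - 1 := by intro i; simp [hSp]
  have hmemSq : ∀ i : Fin n, i ∈ Sq ↔ i.val < q - 1 := by intro i; simp [hSq]
  constructor
  · -- weak saturation
    set A : List (Fin n × Fin n) :=
      (Finset.univ.filter fun e : Fin n × Fin n =>
        p ≤ e.1.val + 1 ∧ e.1.val + 1 < q ∧ q ≤ e.2.val + 1).toList with hA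
    set B : List (Fin n × Fin n) :=
      (Finset.univ.filter fun e : Fin n × Fin n =>
        q ≤ e.1.val + 1 ∧ p ≤ e.2.val + 1 ∧ e.2.val + 1 < q).toList with hB
    set C : List (Fin n × Fin n) :=
      (Finset.univ.filter fun e : Fin n × Fin n =>
        q ≤ e.1.val + 1 ∧ q ≤ e.2.val + 1).toList with hC
    have hmemA : ∀ e : Fin n × Fin n, e ∈ A ↔
        (p ≤ e.1.val + 1 ∧ e.1.val + 1 < q ∧ q ≤ e.2.val + 1) := by
      intro e; simp [hA]
    have hmemB : ∀ e : Fin n × Fin n, e ∈ B ↔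
        (q ≤ e.1.val + 1 ∧ p ≤ e.2.val + 1 ∧ e.2.val + 1 < q) := by
      intro e; simp [hB]
    have hmemC : ∀ e : Fin n × Fin n, e ∈ C ↔
        (q ≤ e.1.val + 1 ∧ q ≤ e.2.val + 1) := by
      intro e; simp [hC]
    refine ⟨A ++ B ++ C, ?_, ?_, ?_⟩
    · -- Nodup
      rw [List.nodup_append, List.nodup_append]
      refine ⟨⟨Finset.nodup_toList _, Finset.nodup_toList _, ?_⟩, Finset.nodup_toList _, ?_⟩
      · rintro x hx y hy rfl
        rw [hmemA] at hx; rw [hmemB] at hy; omega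
      · rintro x hx y hy rfl
        rw [List.mem_append, hmemA, hmemB] at hx
        rw [hmemC] at hy
        omega
    · -- membership
      intro e
      simp only [List.mem_append, hmemA, hmemB, hmemC, hmemE]
      omega
    · -- saturation process
      intro k
      have hself : (A ++ B ++ C).get k ∈ (A ++ B ++ C).take (k.val + 1) :=
        mem_take_succ_get _ k
      obtain ⟨e, he⟩ : ∃ e, (A ++ B ++ C).get k = e := ⟨_, rfl⟩
      rw [he] at hself
      have hget : e ∈ A ++ B ++ C := by
        rw [← he, List.get_eq_getElem]
        exact List.getElem_mem k.isLt
      rw [he]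
      rw [List.mem_append, List.mem_append, hmemA, hmemB, hmemC] at hget
      rcases hget with (h1 | h2) | h3
      · -- phase 1: S = Sp ∪ {e.1} (p rows), T = Sq ∪ {e.2} (q cols)
        refine ⟨insert e.1 Sp, insert e.2 Sq, ?_, ?_, ?_⟩
        · left
          constructor
          · rw [Finset.card_insert_of_notMem (by rw [hmemSp]; omega), hSpcard]; omega
          · rw [Finset.card_insert_of_notMem (by rw [hmemSq]; omega), hSqcard]; omega
        · simp [Finset.mem_product]
        · intro z hz
          simp only [Finset.mem_product, Finset.mem_insert, hmemSp, hmemSq] at hz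
          rcases hz with ⟨hz1 | hz1, hz2 | hz2⟩
          · -- z = e
            have : z = e := Prod.ext hz1 hz2
            subst this
            exact Finset.mem_union_right _ (List.mem_toFinset.mpr hself)
          all_goals
            refine Finset.mem_union_left _ ?_
            rw [hmemE]
            omega
      · -- phase 2: S = Sq ∪ {e.1} (q rows), T = Sp ∪ {e.2} (p cols)
        refine ⟨insert e.1 Sq, insert e.2 Sp, ?_, ?_, ?_⟩
        · right
          constructor
          · rw [Finset.card_insert_of_notMem (by rw [hmemSq]; omega), hSqcard]; omega
          · rw [Finset.card_insert_of_notMem (by rw [hmemSp]; omega), hSpcard]; omega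
        · simp [Finset.mem_product]
        · intro z hz
          simp only [Finset.mem_product, Finset.mem_insert, hmemSq, hmemSp] at hz
          rcases hz with ⟨hz1 | hz1, hz2 | hz2⟩
          · have : z = e := Prod.ext hz1 hz2
            subst this
            exact Finset.mem_union_right _ (List.mem_toFinset.mpr hself)
          all_goals
            refine Finset.mem_union_left _ ?_
            rw [hmemE]
            omega
      · -- phase 3
        have hk : (A ++ B).length ≤ k.val := by
          by_contra hlt
          push_neg at hlt
          have hmem : e ∈ A ++ B := by
            rw [← he, List.get_eq_getElem, List.getElem_append_left hlt]
            exact List.getElem_mem hlt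
          rw [List.mem_append, hmemA, hmemB] at hmem
          omega
        have hpre : ∀ x, x ∈ A ++ B → x ∈ (A ++ B ++ C).take (k.val + 1) := by
          intro x hx
          rw [List.take_append]
          refine List.mem_append_left _ ?_
          rwa [List.take_of_length_le (by omega)]
        refine ⟨insert e.1 Sp, insert e.2 Sq, ?_, ?_, ?_⟩
        · left
          constructor
          · rw [Finset.card_insert_of_notMem (by rw [hmemSp]; omega), hSpcard]; omega
          · rw [Finset.card_insert_of_notMem (by rw [hmemSq]; omega), hSqcard]; omega
        · simp [Finset.mem_product]
        · intro z hz
          simp only [Finset.mem_product, Finset.mem_insert, hmemSp, hmemSq] at hz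
          rcases hz with ⟨hz1 | hz1, hz2 | hz2⟩
          · have : z = e := Prod.ext hz1 hz2
            subst this
            exact Finset.mem_union_right _ (List.mem_toFinset.mpr hself)
          · -- z = (e.1, small-or-mid column)
            by_cases hzp : z.2.val + 1 < p
            · refine Finset.mem_union_left _ ?_
              rw [hmemE]; omega
            · -- mid column : phase-2 edge
              refine Finset.mem_union_right _ (List.mem_toFinset.mpr (hpre z ?_))
              rw [List.mem_append, hmemA, hmemB]
              right
              omega
          all_goals
            refine Finset.mem_union_left _ ?_
            rw [hmemE]
            omega
  · -- the edge count
    set R : Finset (Fin n) := Finset.univ.filter fun i : Fin n => p - 1 ≤ i.val ∧ i.val < n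
      with hR
    set M : Finset (Fin n) := Finset.univ.filter fun i : Fin n => p - 1 ≤ i.val ∧ i.val < q - 1
      with hM
    have hRcard : R.card = n - (p - 1) := finIv_card n (p - 1) n le_rfl
    have hMcard : M.card = (q - 1) - (p - 1) := finIv_card n (p - 1) (q - 1) (by omega)
    have hEeq : E = (Finset.univ \ (R ×ˢ R)) ∪ (M ×ˢ M) := by
      ext z
      have h1 := z.1.isLt
      have h2 := z.2.isLt
      simp only [hmemE, Finset.mem_union, Finset.mem_sdiff, Finset.mem_univ, true_and,
        Finset.mem_product, hR, hM, Finset.mem_filter]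
      omega
    have hdisj : Disjoint (Finset.univ \ (R ×ˢ R)) (M ×ˢ M) := by
      rw [Finset.disjoint_left]
      intro z hz hz'
      simp only [Finset.mem_sdiff, Finset.mem_univ, true_and, Finset.mem_product, hR, hM,
        Finset.mem_filter] at hz hz'
      omega
    rw [hEeq, Finset.card_union_of_disjoint hdisj,
      Finset.card_sdiff_of_subset (Finset.subset_univ _), Finset.card_univ, Fintype.card_prod,
      Fintype.card_fin, Finset.card_product, Finset.card_product, hRcard, hMcard]
    have e1 : n - (p - 1) = n - p + 1 := by omega
    have e2 : (q - 1) - (p - 1) = q - p := by omega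
    rw [e1, e2, pow_two, pow_two, pow_two]
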